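/- Let (Y_i)_{i ∈ I} be a family of Esakia root systems. For each i ∈ I let p_i : ⊗Y_i → Y_i send C to π_i(m(C)), where m(C) is the least element of C. Then each p_i is a continuous p-morphism, and ⊗Y_i together with the maps p_i is the product of (Y_i)_{i ∈ I} in the category of Esakia root systems and continuous p-morphisms: for every Esakia root system Z and every family of continuous p-morphisms f_i : Z → Y_i there is a unique continuous p-morphism g : Z → ⊗Y_i with p_i ∘ g = f_i for all i ∈ I. -/

import Mathlib

open Set TopologicalSpace

/-- The set of nonempty closed chains of a Priestley space `X`. -/
def CC (X : Type*) [TopologicalSpace X] [Preorder X] : Set (Set X) :=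
  {C | C.Nonempty ∧ IsClosed C ∧ IsChain (· ≤ ·) C}

variable {X : Type*} [TopologicalSpace X] [Preorder X]

/-- `□A = {C ∈ CC(X) | C ⊆ A}`. -/
def ccBox (A : Set X) : Set ↥(CC X) := {C | (C : Set X) ⊆ A}

/-- `◇A = {C ∈ CC(X) | C ∩ A ≠ ∅}`. -/
def ccDia (A : Set X) : Set ↥(CC X) := {C | ((C : Set X) ∩ A).Nonempty}

/-- The Vietoris topology on `CC X`, generated by the subbasis `{□V, ◇V | V clopen}`. -/
instance ccTop : TopologicalSpace ↥(CC X) :=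
  generateFrom {S | ∃ V : Set X, IsClopen V ∧ (S = ccBox V ∨ S = ccDia V)}

/-- The order `⊴` on closed chains: `C₁ ⊴ C₂` iff `C₂ ⊆ C₁` and `C₂` is an upset in `C₁`. -/
def lec (C₁ C₂ : Set X) : Prop :=
  C₂ ⊆ C₁ ∧ ∀ x ∈ C₂, ∀ y ∈ C₁, x ≤ y → y ∈ C₂

/-- The tensor product of a family of Esakia root systems: the nonempty closed chains of
the product whose projections are all upsets. -/
def tensor {I : Type*} (Y : I → Type*) [∀ i, TopologicalSpace (Y i)] [∀ i, Preorder (Y i)] :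
    Set ↥(CC (∀ i, Y i)) :=
  {C | ∀ i, IsUpperSet ((fun f => f i) '' (C : Set (∀ i, Y i)))}

section Aux
variable {α : Type*} [TopologicalSpace α]

lemma aux_isClosed_Ici [Preorder α] [PriestleySpace α] (y : α) : IsClosed (Ici y) := by
  rw [← isOpen_compl_iff]
  refine isOpen_iff_forall_mem_open.mpr fun x hx => ?_
  obtain ⟨U, hU, hUup, hyU, hxU⟩ := exists_isClopen_upper_of_not_le (hx : ¬ y ≤ x)
  exact ⟨Uᶜ, fun w hw hyw => hw (hUup hyw hyU), hU.compl.isOpen, hxU⟩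

lemma aux_isClosed_Iic [Preorder α] [PriestleySpace α] (s : α) : IsClosed (Iic s) := by
  rw [← isOpen_compl_iff]
  refine isOpen_iff_forall_mem_open.mpr fun x hx => ?_
  obtain ⟨U, hU, hUlo, hxU, hsU⟩ := exists_isClopen_lower_of_not_le (hx : ¬ x ≤ s)
  exact ⟨Uᶜ, fun w hw hws => hw (hUlo hws hsU), hU.compl.isOpen, hxU⟩

/-- In a compact Priestley space, it suffices to check continuity on clopen upper and
clopen lower sets. -/
lemma aux_continuous [PartialOrder α] [PriestleySpace α] [CompactSpace α] {β : Type*}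
    [TopologicalSpace β] {p : β → α}
    (h : ∀ U : Set α, IsClopen U → IsUpperSet U → IsOpen (p ⁻¹' U))
    (h' : ∀ U : Set α, IsClopen U → IsLowerSet U → IsOpen (p ⁻¹' U)) : Continuous p := by
  rw [continuous_def]
  intro O hO
  refine isOpen_iff_forall_mem_open.mpr fun b hb => ?_
  set x := p b with hxdef
  have hxO : x ∈ O := hb
  have hsep : ∀ y : α, ∃ W : Set α, IsClopen W ∧ (IsUpperSet W ∨ IsLowerSet W) ∧ x ∈ W ∧
      (y ∈ Oᶜ → y ∉ W) := by
    intro y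
    by_cases hy : y ∈ Oᶜ
    · obtain ⟨W, h1, h2, h3, h4⟩ :=
        exists_isClopen_upper_or_lower_of_ne (show x ≠ y from fun he => hy (he ▸ hxO))
      exact ⟨W, h1, h2, h3, fun _ => h4⟩
    · exact ⟨univ, isClopen_univ, Or.inl isUpperSet_univ, mem_univ x, fun h => absurd h hy⟩
  choose W hWc hWul hxW hyW using hsep
  have hcov : Oᶜ ⊆ ⋃ y, (W y)ᶜ := fun y hy => mem_iUnion.mpr ⟨y, hyW y hy⟩
  obtain ⟨F, hF⟩ := (hO.isClosed_compl.isCompact).elim_finite_subcover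
    (fun y => (W y)ᶜ) (fun y => (hWc y).compl.isOpen) hcov
  refine ⟨p ⁻¹' (⋂ y ∈ F, W y), ?_, ?_, ?_⟩
  · refine fun w hw => ?_
    by_contra hwO
    obtain ⟨y, hyF, hyc⟩ := mem_iUnion₂.mp (hF hwO)
    exact hyc (mem_iInter₂.mp hw y hyF)
  · rw [preimage_iInter₂]
    exact isOpen_biInter_finset fun y _ => (hWul y).elim (h _ (hWc y)) (h' _ (hWc y))
  · exact mem_preimage.mpr (mem_iInter₂.mpr fun y _ => hxW y)

/-- A nonempty closed chain in a compact Priestley space has a least element. -/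
lemma aux_exists_least [PartialOrder α] [PriestleySpace α] [CompactSpace α] {S : Set α}
    (hne : S.Nonempty) (hcl : IsClosed S) (hch : IsChain (· ≤ ·) S) :
    ∃ a ∈ S, ∀ b ∈ S, a ≤ b := by
  have : Nonempty S := hne.to_subtype
  have key : (⋂ s : S, (S ∩ Iic s.1)).Nonempty := by
    refine IsCompact.nonempty_iInter_of_directed_nonempty_isCompact_isClosed
      (fun s : S => S ∩ Iic s.1) ?_ (fun s => ⟨s.1, s.2, le_refl _⟩)
      (fun s => ((hcl.inter (aux_isClosed_Iic s.1)).isCompact))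
      (fun s => hcl.inter (aux_isClosed_Iic s.1))
    intro s t
    rcases eq_or_ne s.1 t.1 with he | hne'
    · exact ⟨s, Subset.rfl, fun x hx => ⟨hx.1, he ▸ hx.2⟩⟩
    rcases hch s.2 t.2 hne' with hle | hle
    · exact ⟨s, Subset.rfl, fun x hx => ⟨hx.1, hx.2.trans hle⟩⟩
    · exact ⟨t, fun x hx => ⟨hx.1, hx.2.trans hle⟩, Subset.rfl⟩
  obtain ⟨a, ha⟩ := key
  have h1 : a ∈ S := (mem_iInter.mp ha ⟨_, hne.some_mem⟩).1
  exact ⟨a, h1, fun b hb => (mem_iInter.mp ha ⟨b, hb⟩).2⟩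

lemma aux_isOpen_ccBox {V : Set X} (hV : IsClopen V) : IsOpen (ccBox V) :=
  isOpen_generateFrom_of_mem ⟨V, hV, Or.inl rfl⟩

lemma aux_isOpen_ccDia {V : Set X} (hV : IsClopen V) : IsOpen (ccDia V) :=
  isOpen_generateFrom_of_mem ⟨V, hV, Or.inr rfl⟩

end Aux

theorem stmt11 (I : Type*) (Y : I → Type*) [∀ i, TopologicalSpace (Y i)]
    [∀ i, PartialOrder (Y i)] [∀ i, CompactSpace (Y i)] [∀ i, PriestleySpace (Y i)]
    (hEsa : ∀ i, ∀ V : Set (Y i), IsClopen V → IsClopen {x : Y i | ∃ y ∈ V, x ≤ y})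
    (hRoot : ∀ i, ∀ y : Y i, IsChain (· ≤ ·) (Ici y))
    (m : ↥(CC (∀ i, Y i)) → (∀ i, Y i))
    (hm : ∀ C : ↥(CC (∀ i, Y i)), m C ∈ (C : Set (∀ i, Y i)) ∧
      ∀ x ∈ (C : Set (∀ i, Y i)), m C ≤ x) :
    (∀ i, Continuous (fun C : ↥(tensor Y) => m C.1 i)) ∧
    (∀ i, ∀ C₁ C₂ : ↥(tensor Y),
      lec (C₁.1 : Set (∀ i, Y i)) (C₂.1 : Set (∀ i, Y i)) → m C₁.1 i ≤ m C₂.1 i) ∧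
    (∀ i, ∀ C : ↥(tensor Y), ∀ z : Y i, m C.1 i ≤ z →
      ∃ K : ↥(tensor Y), lec (C.1 : Set (∀ i, Y i)) (K.1 : Set (∀ i, Y i)) ∧ m K.1 i = z) ∧
    (∀ (Z : Type*) [TopologicalSpace Z] [PartialOrder Z] [CompactSpace Z] [PriestleySpace Z],
      (∀ V : Set Z, IsClopen V → IsClopen {x : Z | ∃ y ∈ V, x ≤ y}) →
      (∀ z : Z, IsChain (· ≤ ·) (Ici z)) →
      ∀ f : ∀ i, Z → Y i,
        (∀ i, Continuous (f i)) →
        (∀ i, Monotone (f i)) →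
        (∀ i, ∀ z : Z, ∀ w : Y i, f i z ≤ w → ∃ z', z ≤ z' ∧ f i z' = w) →
        ∃! g : Z → ↥(tensor Y),
          Continuous g ∧
          (∀ z₁ z₂ : Z, z₁ ≤ z₂ →
            lec ((g z₁).1 : Set (∀ i, Y i)) ((g z₂).1 : Set (∀ i, Y i))) ∧
          (∀ z : Z, ∀ K : ↥(tensor Y),
            lec ((g z).1 : Set (∀ i, Y i)) (K.1 : Set (∀ i, Y i)) → ∃ z', z ≤ z' ∧ g z' = K) ∧
          (∀ i, ∀ z : Z, m (g z).1 i = f i z)) := by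
  classical
  -- `Ici` is closed in the product
  have hIciP : ∀ c : ∀ i, Y i, IsClosed (Ici c) := by
    intro c
    have he : Ici c = ⋂ i, (fun x : ∀ i, Y i => x i) ⁻¹' Ici (c i) := by
      ext x
      simp only [mem_Ici, mem_iInter, mem_preimage, Pi.le_def]
    rw [he]
    exact isClosed_iInter fun i => (aux_isClosed_Ici (c i)).preimage (continuous_apply i)
  -- projections of tensor elements are principal upsets at the minimum
  have hproj : ∀ D : ↥(CC (∀ i, Y i)), D ∈ tensor Y → ∀ i,
      (fun x : ∀ i, Y i => x i) '' (D : Set (∀ i, Y i)) = Ici (m D i) := by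
    intro D hD i
    apply Subset.antisymm
    · rintro _ ⟨x, hx, rfl⟩
      exact (hm D).2 x hx i
    · intro y hy
      exact hD i hy ⟨m D, (hm D).1, rfl⟩
  -- the key construction: upsets of tensor elements are tensor elements
  have hKcon : ∀ D : ↥(CC (∀ i, Y i)), D ∈ tensor Y → ∀ c ∈ (D : Set (∀ i, Y i)),
      ∃ K : ↥(tensor Y), (K.1 : Set (∀ i, Y i)) = (D : Set (∀ i, Y i)) ∩ Ici c ∧
        lec (D : Set (∀ i, Y i)) (K.1 : Set (∀ i, Y i)) ∧ m K.1 = c := by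
    intro D hD c hc
    obtain ⟨hDne, hDcl, hDch⟩ := D.2
    have hmem : (D : Set (∀ i, Y i)) ∩ Ici c ∈ CC (∀ i, Y i) := by
      refine ⟨⟨c, hc, self_mem_Ici⟩, hDcl.inter (hIciP c), ?_⟩
      exact fun a ha b hb hne => hDch ha.1 hb.1 hne
    have htens : (⟨_, hmem⟩ : ↥(CC (∀ i, Y i))) ∈ tensor Y := by
      intro i a b hab ha
      obtain ⟨x, ⟨hxD, hxc⟩, rfl⟩ := ha
      obtain ⟨y, hyD, hyi⟩ := hD i hab ⟨x, hxD, rfl⟩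
      rcases eq_or_ne y c with rfl | hne
      · exact ⟨y, ⟨hyD, self_mem_Ici⟩, hyi⟩
      rcases hDch hyD hc hne with hyc | hcy
      · have h1 : (b : Y i) ≤ c i := hyi ▸ hyc i
        have h2 : c i ≤ b := (hxc i).trans hab
        exact ⟨c, ⟨hc, le_refl c⟩, le_antisymm h2 h1⟩
      · exact ⟨y, ⟨hyD, hcy⟩, hyi⟩
    refine ⟨⟨⟨_, hmem⟩, htens⟩, rfl,
      ⟨inter_subset_left, fun x hx y hy hxy => ⟨hy, hx.2.trans hxy⟩⟩, ?_⟩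
    exact le_antisymm ((hm ⟨_, hmem⟩).2 c ⟨hc, self_mem_Ici⟩) (hm ⟨_, hmem⟩).1.2
  refine ⟨?_, ?_, ?_, ?_⟩
  · -- continuity of the projections
    intro i
    refine aux_continuous ?_ ?_
    · intro U hU hUup
      have heq : (fun C : ↥(tensor Y) => m C.1 i) ⁻¹' U =
          Subtype.val ⁻¹' (ccBox ((fun x : ∀ i, Y i => x i) ⁻¹' U)) := by
        ext C
        constructor
        · intro hC x hx
          exact hUup ((hm C.1).2 x hx i) hC
        · intro hC
          exact hC (hm C.1).1
      rw [heq]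
      exact (aux_isOpen_ccBox (hU.preimage (continuous_apply i))).preimage
        continuous_subtype_val
    · intro U hU hUlo
      have heq : (fun C : ↥(tensor Y) => m C.1 i) ⁻¹' U =
          Subtype.val ⁻¹' (ccDia ((fun x : ∀ i, Y i => x i) ⁻¹' U)) := by
        ext C
        constructor
        · intro hC
          exact ⟨m C.1, (hm C.1).1, hC⟩
        · rintro ⟨x, hxC, hxU⟩
          exact hUlo ((hm C.1).2 x hxC i) hxU
      rw [heq]
      exact (aux_isOpen_ccDia (hU.preimage (continuous_apply i))).preimage
        continuous_subtype_val
  · -- monotonicity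
    intro i C₁ C₂ hlec
    exact (hm C₁.1).2 (m C₂.1) (hlec.1 (hm C₂.1).1) i
  · -- p-morphism property
    intro i C z hz
    have hzmem : z ∈ (fun x : ∀ i, Y i => x i) '' (C.1 : Set (∀ i, Y i)) := by
      rw [hproj C.1 C.2 i]; exact hz
    obtain ⟨c, hcC, hci⟩ := hzmem
    obtain ⟨K, -, hlec, hmK⟩ := hKcon C.1 C.2 c hcC
    exact ⟨K, hlec, by rw [hmK]; exact hci⟩
  · -- universal property
    intro Z _ _ _ _ hEsaZ hRootZ f hfc hfm hfp
    set F : Z → ∀ i, Y i := fun z i => f i z with hFdef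
    have hFc : Continuous F := continuous_pi fun i => hfc i
    have hFm : Monotone F := fun a b h i => hfm i h
    have hGcc : ∀ z : Z, F '' Ici z ∈ CC (∀ i, Y i) := by
      intro z
      refine ⟨⟨F z, z, self_mem_Ici, rfl⟩,
        (((aux_isClosed_Ici z).isCompact).image hFc).isClosed, ?_⟩
      rintro _ ⟨u, hu, rfl⟩ _ ⟨v, hv, rfl⟩ hne
      rcases eq_or_ne u v with rfl | huv
      · exact absurd rfl hne
      rcases hRootZ z hu hv huv with h | h
      · exact Or.inl (hFm h)
      · exact Or.inr (hFm h)
    have hGtens : ∀ z : Z, (⟨F '' Ici z, hGcc z⟩ : ↥(CC (∀ i, Y i))) ∈ tensor Y := by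
      intro z i a b hab ha
      obtain ⟨x, ⟨u, hu, rfl⟩, rfl⟩ := ha
      obtain ⟨u', huu', hfu'⟩ := hfp i u b hab
      exact ⟨F u', ⟨u', hu.trans huu', rfl⟩, hfu'⟩
    set g : Z → ↥(tensor Y) := fun z => ⟨⟨F '' Ici z, hGcc z⟩, hGtens z⟩ with hgdef
    have hmg : ∀ z : Z, m (g z).1 = F z := by
      intro z
      obtain ⟨u, hu, he⟩ := (hm (g z).1).1
      exact le_antisymm ((hm (g z).1).2 (F z) ⟨z, self_mem_Ici, rfl⟩) (he ▸ hFm hu)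
    have hgmono : ∀ z₁ z₂ : Z, z₁ ≤ z₂ →
        lec ((g z₁).1 : Set (∀ i, Y i)) ((g z₂).1 : Set (∀ i, Y i)) := by
      intro z₁ z₂ h12
      constructor
      · exact image_mono (Ici_subset_Ici.mpr h12)
      · rintro _ ⟨u, hu, rfl⟩ _ ⟨v, hv, rfl⟩ hle
        rcases eq_or_ne u v with rfl | huv
        · exact ⟨u, hu, rfl⟩
        rcases hRootZ z₁ (h12.trans hu) hv huv with h | h
        · exact ⟨v, hu.trans h, rfl⟩
        · have hvu : F v = F u := le_antisymm (hFm h) hle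
          rw [hvu]
          exact ⟨u, hu, rfl⟩
    have hgp : ∀ z : Z, ∀ K : ↥(tensor Y),
        lec ((g z).1 : Set (∀ i, Y i)) (K.1 : Set (∀ i, Y i)) →
        ∃ z', z ≤ z' ∧ g z' = K := by
      rintro z K ⟨hsub, hup⟩
      set S : Set Z := Ici z ∩ F ⁻¹' (K.1 : Set (∀ i, Y i)) with hSdef
      have hSne : S.Nonempty := by
        obtain ⟨u, hu, he⟩ := hsub (hm K.1).1
        refine ⟨u, hu, ?_⟩
        rw [mem_preimage, he]
        exact (hm K.1).1
      have hScl : IsClosed S := (aux_isClosed_Ici z).inter (K.1.2.2.1.preimage hFc)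
      have hSch : IsChain (· ≤ ·) S := fun a ha b hb hne => hRootZ z ha.1 hb.1 hne
      obtain ⟨z₀, hz₀S, hz₀min⟩ := aux_exists_least hSne hScl hSch
      refine ⟨z₀, hz₀S.1, ?_⟩
      have hset : F '' Ici z₀ = (K.1 : Set (∀ i, Y i)) := by
        apply Subset.antisymm
        · rintro _ ⟨u, hu, rfl⟩
          exact hup (F z₀) hz₀S.2 (F u) ⟨u, hz₀S.1.trans hu, rfl⟩ (hFm hu)
        · intro k hk
          obtain ⟨u, hu, he⟩ := hsub hk
          have huS : u ∈ S := ⟨hu, by rw [mem_preimage, he]; exact hk⟩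
          exact ⟨u, hz₀min u huS, he⟩
      exact Subtype.ext (Subtype.ext hset)
    have hgc : Continuous g := by
      apply Continuous.subtype_mk
      refine continuous_generateFrom_iff.mpr ?_
      rintro s ⟨V, hV, rfl | rfl⟩
      · have heq : (fun z : Z => (⟨F '' Ici z, hGcc z⟩ : ↥(CC (∀ i, Y i)))) ⁻¹' ccBox V =
            {x : Z | ∃ y ∈ F ⁻¹' Vᶜ, x ≤ y}ᶜ := by
          ext z
          simp only [mem_preimage, mem_compl_iff, mem_setOf_eq, not_exists, not_and]
          constructor
          · intro h y hyV hzy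
            exact hyV (h ⟨y, hzy, rfl⟩)
          · rintro h _ ⟨u, hu, rfl⟩
            by_contra hc
            exact h u hc hu
        rw [heq]
        exact ((hEsaZ _ ((hV.compl).preimage hFc)).compl).isOpen
      · have heq : (fun z : Z => (⟨F '' Ici z, hGcc z⟩ : ↥(CC (∀ i, Y i)))) ⁻¹' ccDia V =
            {x : Z | ∃ y ∈ F ⁻¹' V, x ≤ y} := by
          ext z
          constructor
          · rintro ⟨_, ⟨u, hu, rfl⟩, hV'⟩
            exact ⟨u, hV', hu⟩
          · rintro ⟨y, hyV, hzy⟩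
            exact ⟨F y, ⟨y, hzy, rfl⟩, hyV⟩
        rw [heq]
        exact (hEsaZ _ (hV.preimage hFc)).isOpen
    refine ⟨g, ⟨hgc, hgmono, hgp, fun i z => ?_⟩, ?_⟩
    · exact congrFun (hmg z) i
    · rintro g' ⟨-, hmono', hp', hf'⟩
      have hmg' : ∀ w : Z, m (g' w).1 = F w := fun w => funext fun i => hf' i w
      funext z
      refine Subtype.ext (Subtype.ext ?_)
      apply Subset.antisymm
      · intro x hx
        obtain ⟨K, -, hlec, hmK⟩ := hKcon (g' z).1 (g' z).2 x hx
        obtain ⟨z', hzz', hgz'⟩ := hp' z K hlec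
        refine ⟨z', hzz', ?_⟩
        rw [← hmg' z', hgz']
        exact hmK
      · rintro _ ⟨u, hu, rfl⟩
        have hmem := (hmono' z u hu).1 (hm (g' u).1).1
        rwa [hmg' u] at hmem
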